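/- Let n ≥ 2 and m ≥ 1. The minimum number of affine hyperplanes in ℝ^n that cover every point of {0,1,…,m}^n \ {0} at least twice (with multiplicity) while avoiding the origin is exactly mn + m. -/

import Mathlib

section Univariate
open Polynomial


lemma sq_dvd_of_root_of_deriv {f : ℝ[X]} {r : ℝ} (h1 : f.IsRoot r)
    (h2 : f.derivative.IsRoot r) : (X - C r) ^ 2 ∣ f := by
  obtain ⟨g, hg⟩ := dvd_iff_isRoot.mpr h1
  have hd : f.derivative = g + (X - C r) * g.derivative := by
    rw [hg, derivative_mul]; simp
  have hgr : g.IsRoot r := by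
    have h2' := h2
    rw [hd] at h2'
    simpa [IsRoot] using h2'
  obtain ⟨k, hk⟩ := dvd_iff_isRoot.mpr hgr
  exact ⟨k, by rw [hg, hk]; ring⟩

lemma prod_sq_dvd {m : ℕ} {f : ℝ[X]} (r : Fin m → ℝ) (hr : Function.Injective r)
    (h : ∀ t, f.IsRoot (r t) ∧ f.derivative.IsRoot (r t)) :
    (∏ t : Fin m, (X - C (r t)) ^ 2) ∣ f := by
  refine Finset.prod_dvd_of_coprime ?_ fun t _ => sq_dvd_of_root_of_deriv (h t).1 (h t).2
  intro a _ b _ hab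
  exact ((Polynomial.pairwise_coprime_X_sub_C hr hab).pow)


lemma root_prod_injective {m : ℕ} {f : ℝ[X]} (hdeg : f ∈ degreeLT ℝ m)
    (h : ∀ t : Fin m, f.IsRoot (((t : ℕ) : ℝ) + 1)) : f = 0 := by
  by_contra hf
  have hr : Function.Injective (fun t : Fin m => ((t : ℕ) : ℝ) + 1) := by
    intro a b hab
    simp only [add_left_inj, Nat.cast_inj] at hab
    exact Fin.ext hab
  have hdvd : (∏ t : Fin m, (X - C (((t : ℕ) : ℝ) + 1))) ∣ f := by
    refine Finset.prod_dvd_of_coprime ?_ fun t _ => dvd_iff_isRoot.mpr (h t)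
    intro a _ b _ hab
    exact Polynomial.pairwise_coprime_X_sub_C hr hab
  have hnd : (∏ t : Fin m, (X - C (((t : ℕ) : ℝ) + 1))).natDegree = m := by
    rw [Polynomial.natDegree_prod _ _ (fun t _ => X_sub_C_ne_zero _),
      Finset.sum_congr rfl (fun t _ => Polynomial.natDegree_X_sub_C _)]
    simp
  have h1 : m ≤ f.natDegree := by
    rw [← hnd]
    exact Polynomial.natDegree_le_of_dvd hdvd hf
  have h2 : f.degree < m := Polynomial.mem_degreeLT.mp hdeg
  rw [Polynomial.degree_eq_natDegree hf] at h2
  exact absurd (Nat.cast_lt.mp h2) (not_lt.mpr h1)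



lemma exists_w (m : ℕ) : ∃ w : Fin (m + 1) → ℝ, w 0 = 1 ∧
    ∀ k : ℕ, k < m → ∑ t : Fin (m + 1), w t * ((t : ℕ) : ℝ) ^ k = 0 := by
  set E := Polynomial.degreeLTEquiv ℝ m with hE
  set Φ : degreeLT ℝ m →ₗ[ℝ] (Fin m → ℝ) :=
    LinearMap.pi (fun t => (leval (((t : ℕ) : ℝ) + 1)).comp (Submodule.subtype _)) with hΦ
  have hker : ∀ f : degreeLT ℝ m, Φ f = 0 → f = 0 := by
    intro f hf
    have hz : (f : ℝ[X]) = 0 := by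
      refine root_prod_injective f.2 (fun t => ?_)
      have := congrFun hf t
      simpa [hΦ, IsRoot, LinearMap.pi_apply] using this
    exact Subtype.ext hz
  have hinj : Function.Injective Φ := by
    rw [← LinearMap.ker_eq_bot, Submodule.eq_bot_iff]
    exact fun f hf => hker f hf
  set Φ' : (Fin m → ℝ) →ₗ[ℝ] (Fin m → ℝ) := Φ ∘ₗ E.symm.toLinearMap with hΦ'
  have hinj' : Function.Injective Φ' := hinj.comp E.symm.injective
  have hsurj' : Function.Surjective Φ' := LinearMap.injective_iff_surjective.mp hinj'
  set eL := LinearEquiv.ofBijective Φ' ⟨hinj', hsurj'⟩ with heL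
  set ψ : (Fin m → ℝ) →ₗ[ℝ] ℝ :=
    (leval 0) ∘ₗ (degreeLT ℝ m).subtype ∘ₗ E.symm.toLinearMap ∘ₗ eL.symm.toLinearMap with hψ
  have key : ∀ f : degreeLT ℝ m, ψ (Φ f) = Polynomial.eval 0 (f : ℝ[X]) := by
    intro f
    have h1 : Φ f = eL (E f) := by
      rw [heL]; show _ = Φ' (E f); rw [hΦ']
      simp
    rw [hψ]
    simp [h1]
  refine ⟨Fin.cons 1 (fun t => - ψ (fun j => if t = j then 1 else 0)), Fin.cons_zero _ _, ?_⟩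
  intro k hk
  have hfmem : (X : ℝ[X]) ^ k ∈ degreeLT ℝ m := by
    rw [Polynomial.mem_degreeLT, Polynomial.degree_X_pow]
    exact_mod_cast hk
  have hψf := key ⟨X ^ k, hfmem⟩
  have hΦf : Φ ⟨X ^ k, hfmem⟩ = fun t : Fin m => (((t : ℕ) : ℝ) + 1) ^ k := by
    funext t
    simp [hΦ, LinearMap.pi_apply]
  rw [hΦf, LinearMap.pi_apply_eq_sum_univ ψ] at hψf
  simp only [smul_eq_mul, Polynomial.eval_pow, Polynomial.eval_X] at hψf
  rw [Fin.sum_univ_succ]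
  simp only [Fin.cons_zero, Fin.cons_succ, Fin.val_succ, Fin.val_zero]
  push_cast
  rw [show ((0 : ℝ)) ^ k = ∑ t : Fin m, (((t : ℕ) : ℝ) + 1) ^ k * ψ (fun j => if t = j then 1 else 0) from hψf.symm]
  rw [one_mul, ← Finset.sum_add_distrib]
  apply Finset.sum_eq_zero
  intro x _
  ring



lemma root2_prod_injective {m : ℕ} {f : ℝ[X]} (hdeg : f ∈ degreeLT ℝ (m + m))
    (h : ∀ t : Fin m, f.IsRoot (((t : ℕ) : ℝ) + 1) ∧ f.derivative.IsRoot (((t : ℕ) : ℝ) + 1)) :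
    f = 0 := by
  by_contra hf
  have hr : Function.Injective (fun t : Fin m => ((t : ℕ) : ℝ) + 1) := by
    intro a b hab
    simp only [add_left_inj, Nat.cast_inj] at hab
    exact Fin.ext hab
  have hdvd : (∏ t : Fin m, (X - C (((t : ℕ) : ℝ) + 1)) ^ 2) ∣ f := by
    refine Finset.prod_dvd_of_coprime ?_
      (fun t _ => sq_dvd_of_root_of_deriv (h t).1 (h t).2)
    intro a _ b _ hab
    exact (Polynomial.pairwise_coprime_X_sub_C hr hab).pow
  have hnd : (∏ t : Fin m, (X - C (((t : ℕ) : ℝ) + 1)) ^ 2).natDegree = m + m := by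
    rw [Polynomial.natDegree_prod _ _ (fun t _ => pow_ne_zero _ (X_sub_C_ne_zero _))]
    have : ∀ t : Fin m, ((X - C (((t : ℕ) : ℝ) + 1)) ^ 2).natDegree = 2 := fun t => by
      rw [Polynomial.natDegree_pow, Polynomial.natDegree_X_sub_C]
    rw [Finset.sum_congr rfl (fun t _ => this t)]
    simp [Finset.card_univ]
    ring
  have h1 : m + m ≤ f.natDegree := by
    rw [← hnd]
    exact Polynomial.natDegree_le_of_dvd hdvd hf
  have h2 : f.degree < ((m + m : ℕ) : WithBot ℕ) := Polynomial.mem_degreeLT.mp hdeg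
  rw [Polynomial.degree_eq_natDegree hf] at h2
  exact absurd (Nat.cast_lt.mp h2) (not_lt.mpr h1)



lemma exists_ab (m : ℕ) : ∃ a b : Fin (m + 1) → ℝ, a 0 = 1 ∧ b 0 = 0 ∧
    ∀ k : ℕ, k < m + m →
      ∑ t : Fin (m + 1), (a t * ((t : ℕ) : ℝ) ^ k + b t * (k * ((t : ℕ) : ℝ) ^ (k - 1))) = 0 := by
  set E := Polynomial.degreeLTEquiv ℝ (m + m) with hE
  set Φ : degreeLT ℝ (m + m) →ₗ[ℝ] (Fin m ⊕ Fin m → ℝ) :=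
    LinearMap.pi (fun s => Sum.elim
      (fun t : Fin m => (leval (((t : ℕ) : ℝ) + 1)).comp (Submodule.subtype _))
      (fun t : Fin m => ((leval (((t : ℕ) : ℝ) + 1)).comp Polynomial.derivative).comp
        (Submodule.subtype _)) s) with hΦ
  have hker : ∀ f : degreeLT ℝ (m + m), Φ f = 0 → f = 0 := by
    intro f hf
    have hz : (f : ℝ[X]) = 0 := by
      refine root2_prod_injective f.2 (fun t => ⟨?_, ?_⟩)
      · have := congrFun hf (Sum.inl t)
        simpa [hΦ, IsRoot, LinearMap.pi_apply] using this
      · have := congrFun hf (Sum.inr t)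
        simpa [hΦ, IsRoot, LinearMap.pi_apply] using this
    exact Subtype.ext hz
  have hinj : Function.Injective Φ := by
    rw [← LinearMap.ker_eq_bot, Submodule.eq_bot_iff]
    exact fun f hf => hker f hf
  set e2 : (Fin (m + m) → ℝ) ≃ₗ[ℝ] (Fin m ⊕ Fin m → ℝ) :=
    LinearEquiv.funCongrLeft ℝ ℝ finSumFinEquiv with he2
  set Φ' : (Fin (m + m) → ℝ) →ₗ[ℝ] (Fin (m + m) → ℝ) :=
    e2.symm.toLinearMap ∘ₗ Φ ∘ₗ E.symm.toLinearMap with hΦ'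
  have hinj' : Function.Injective Φ' := by
    simp only [hΦ', LinearMap.coe_comp, LinearEquiv.coe_coe]
    exact e2.symm.injective.comp (hinj.comp E.symm.injective)
  have hsurj' : Function.Surjective Φ' := LinearMap.injective_iff_surjective.mp hinj'
  set eL := LinearEquiv.ofBijective Φ' ⟨hinj', hsurj'⟩ with heL
  set ψ : (Fin m ⊕ Fin m → ℝ) →ₗ[ℝ] ℝ :=
    (leval 0) ∘ₗ (degreeLT ℝ (m + m)).subtype ∘ₗ E.symm.toLinearMap ∘ₗ eL.symm.toLinearMap
      ∘ₗ e2.symm.toLinearMap with hψ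
  have key : ∀ f : degreeLT ℝ (m + m), ψ (Φ f) = Polynomial.eval 0 (f : ℝ[X]) := by
    intro f
    have h1 : e2.symm (Φ f) = eL (E f) := by
      rw [heL]; show _ = Φ' (E f); rw [hΦ']
      simp
    rw [hψ]
    simp only [LinearMap.coe_comp, LinearEquiv.coe_coe, Function.comp_apply]
    rw [h1]
    simp
  refine ⟨Fin.cons 1 (fun t => - ψ (fun j => if Sum.inl t = j then 1 else 0)),
    Fin.cons 0 (fun t => - ψ (fun j => if Sum.inr t = j then 1 else 0)),
    Fin.cons_zero _ _, Fin.cons_zero _ _, ?_⟩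
  intro k hk
  have hfmem : (X : ℝ[X]) ^ k ∈ degreeLT ℝ (m + m) := by
    rw [Polynomial.mem_degreeLT, Polynomial.degree_X_pow]
    exact_mod_cast hk
  have hψf := key ⟨X ^ k, hfmem⟩
  have hΦf : Φ ⟨X ^ k, hfmem⟩ = Sum.elim (fun t : Fin m => (((t : ℕ) : ℝ) + 1) ^ k)
      (fun t : Fin m => k * (((t : ℕ) : ℝ) + 1) ^ (k - 1)) := by
    funext s
    cases s with
    | inl t => simp [hΦ, LinearMap.pi_apply]
    | inr t => simp [hΦ, LinearMap.pi_apply, Polynomial.derivative_X_pow]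
  rw [hΦf, LinearMap.pi_apply_eq_sum_univ ψ, Fintype.sum_sum_type] at hψf
  simp only [Sum.elim_inl, Sum.elim_inr, smul_eq_mul, Polynomial.eval_pow,
    Polynomial.eval_X] at hψf
  rw [Fin.sum_univ_succ]
  simp only [Fin.cons_zero, Fin.cons_succ, Fin.val_succ, Fin.val_zero, Nat.cast_zero,
    Nat.cast_add, Nat.cast_one]
  rw [Finset.sum_add_distrib]
  have e1 : ∑ t : Fin m, (- ψ (fun j => if Sum.inl t = j then 1 else 0)) * (((t : ℕ) : ℝ) + 1) ^ k
      = - ∑ t : Fin m, (((t : ℕ) : ℝ) + 1) ^ k * ψ (fun j => if Sum.inl t = j then 1 else 0) := by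
    rw [← Finset.sum_neg_distrib]
    exact Finset.sum_congr rfl fun t _ => by ring
  have e2' : ∑ t : Fin m,
        (- ψ (fun j => if Sum.inr t = j then 1 else 0)) * ((k : ℝ) * (((t : ℕ) : ℝ) + 1) ^ (k - 1))
      = - ∑ t : Fin m,
        (k : ℝ) * (((t : ℕ) : ℝ) + 1) ^ (k - 1) * ψ (fun j => if Sum.inr t = j then 1 else 0) := by
    rw [← Finset.sum_neg_distrib]
    exact Finset.sum_congr rfl fun t _ => by ring
  rw [e1, e2']
  linarith [hψf]

end Univariate

section Multivariate
open MvPolynomial Finset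


lemma mono_sum_eq (m n : ℕ) (w A B : Fin (m + 1) → ℝ) (i0 : Fin n)
    (γ : Fin n →₀ ℕ) (r : ℝ) :
    ∑ a : Fin n → Fin (m + 1), (∏ i ∈ Finset.univ.erase i0, w (a i)) *
      (A (a i0) * eval (fun i => ((a i : ℕ) : ℝ)) (monomial γ r)
       + B (a i0) * eval (fun i => ((a i : ℕ) : ℝ)) (pderiv i0 (monomial γ r)))
    = r * (∑ t : Fin (m + 1), (A t * ((t : ℕ) : ℝ) ^ (γ i0)
            + B t * ((γ i0 : ℝ) * ((t : ℕ) : ℝ) ^ (γ i0 - 1))))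
        * ∏ i ∈ Finset.univ.erase i0, (∑ t : Fin (m + 1), w t * ((t : ℕ) : ℝ) ^ (γ i)) := by
  classical
  set k := γ i0 with hk
  set F : Fin n → Fin (m + 1) → ℝ := fun i t =>
    if i = i0 then A t * ((t : ℕ) : ℝ) ^ k + B t * ((k : ℝ) * ((t : ℕ) : ℝ) ^ (k - 1))
    else w t * ((t : ℕ) : ℝ) ^ (γ i) with hF
  have step1 : ∀ a : Fin n → Fin (m + 1),
      (∏ i ∈ Finset.univ.erase i0, w (a i)) *
      (A (a i0) * eval (fun i => ((a i : ℕ) : ℝ)) (monomial γ r)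
       + B (a i0) * eval (fun i => ((a i : ℕ) : ℝ)) (pderiv i0 (monomial γ r)))
      = r * ∏ i, F i (a i) := by
    intro a
    set xa : Fin n → ℝ := fun i => ((a i : ℕ) : ℝ) with hxa
    have hev : eval xa (monomial γ r) = r * ∏ i, xa i ^ γ i := by
      rw [eval_monomial, Finsupp.prod_fintype]
      exact fun i => pow_zero _
    set γ' : Fin n →₀ ℕ := γ - Finsupp.single i0 1 with hγ'
    have hγ'0 : γ' i0 = k - 1 := by
      rw [hγ', Finsupp.tsub_apply, Finsupp.single_eq_same, hk]
    have hγ'i : ∀ i : Fin n, i ≠ i0 → γ' i = γ i := by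
      intro i hi
      rw [hγ', Finsupp.tsub_apply, Finsupp.single_eq_of_ne' (Ne.symm hi)]
      exact Nat.sub_zero _
    have hev' : eval xa (pderiv i0 (monomial γ r)) = (r * (k : ℝ)) * ∏ i, xa i ^ γ' i := by
      rw [pderiv_monomial, eval_monomial, Finsupp.prod_fintype _ _ (fun i => pow_zero _),
        ← hγ', hk]
    have hsplit1 : ∏ i, xa i ^ γ i
        = xa i0 ^ k * ∏ i ∈ Finset.univ.erase i0, xa i ^ γ i :=
      (Finset.mul_prod_erase Finset.univ (fun i => xa i ^ γ i) (Finset.mem_univ i0)).symm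
    have hsplit2 : ∏ i, xa i ^ γ' i
        = xa i0 ^ (k - 1) * ∏ i ∈ Finset.univ.erase i0, xa i ^ γ i := by
      rw [(Finset.mul_prod_erase Finset.univ (fun i => xa i ^ γ' i)
        (Finset.mem_univ i0)).symm, hγ'0]
      congr 1
      exact Finset.prod_congr rfl fun i hi => by rw [hγ'i i (Finset.ne_of_mem_erase hi)]
    have hsplit3 : ∏ i, F i (a i) = F i0 (a i0) * ∏ i ∈ Finset.univ.erase i0, F i (a i) :=
      (Finset.mul_prod_erase Finset.univ (fun i => F i (a i)) (Finset.mem_univ i0)).symm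
    have hFerase : ∏ i ∈ Finset.univ.erase i0, F i (a i)
        = (∏ i ∈ Finset.univ.erase i0, w (a i)) *
          (∏ i ∈ Finset.univ.erase i0, xa i ^ γ i) := by
      rw [← Finset.prod_mul_distrib]
      refine Finset.prod_congr rfl fun i hi => ?_
      rw [hF]
      simp only [if_neg (Finset.ne_of_mem_erase hi)]
      rfl
    have hFi0 : F i0 (a i0) = A (a i0) * xa i0 ^ k + B (a i0) * ((k : ℝ) * xa i0 ^ (k - 1)) := by
      rw [hF]
      simp
      rfl
    rw [hev, hev', hsplit1, hsplit2, hsplit3, hFerase, hFi0]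
    ring
  have hlast : ∀ i ∈ Finset.univ.erase i0,
      (∑ t : Fin (m + 1), F i t) = ∑ t : Fin (m + 1), w t * ((t : ℕ) : ℝ) ^ (γ i) := by
    intro i hi
    refine Finset.sum_congr rfl fun t _ => ?_
    rw [hF]
    simp only [if_neg (Finset.ne_of_mem_erase hi)]
  have hFi0sum : (∑ t : Fin (m + 1), F i0 t)
      = ∑ t : Fin (m + 1), (A t * ((t : ℕ) : ℝ) ^ k
          + B t * ((k : ℝ) * ((t : ℕ) : ℝ) ^ (k - 1))) := by
    refine Finset.sum_congr rfl fun t _ => ?_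
    rw [hF]
    simp
  calc ∑ a : Fin n → Fin (m + 1), (∏ i ∈ Finset.univ.erase i0, w (a i)) *
      (A (a i0) * eval (fun i => ((a i : ℕ) : ℝ)) (monomial γ r)
       + B (a i0) * eval (fun i => ((a i : ℕ) : ℝ)) (pderiv i0 (monomial γ r)))
      = ∑ a : Fin n → Fin (m + 1), r * ∏ i, F i (a i) :=
        Finset.sum_congr rfl fun a _ => step1 a
    _ = r * ∑ a : Fin n → Fin (m + 1), ∏ i, F i (a i) := by rw [Finset.mul_sum]
    _ = r * ∏ i, ∑ t : Fin (m + 1), F i t := by rw [Fintype.prod_sum]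
    _ = r * ((∑ t : Fin (m + 1), F i0 t) *
          ∏ i ∈ Finset.univ.erase i0, ∑ t : Fin (m + 1), F i t) := by
        rw [Finset.mul_prod_erase Finset.univ (fun i => ∑ t : Fin (m + 1), F i t)
          (Finset.mem_univ i0)]
    _ = _ := by
        rw [Finset.prod_congr rfl hlast, hFi0sum]
        ring





lemma lower_bound (m n N : ℕ) (hm : 1 ≤ m) (hn : 2 ≤ n)
    (c : Fin N → Fin n → ℝ) (c₀ : Fin N → ℝ)
    (hcov : ∀ x : Fin n → ℝ, (∀ i, ∃ j : ℕ, j ≤ m ∧ x i = (j : ℝ)) → x ≠ 0 →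
      2 ≤ Set.ncard {j | ∑ i, c j i * x i = c₀ j})
    (h0 : ∀ j, ∑ i, c j i * (0 : ℝ) ≠ c₀ j) :
    m * n + m ≤ N := by
  classical
  by_contra hNlt
  push_neg at hNlt
  obtain ⟨w, hw0, hwk⟩ := exists_w m
  obtain ⟨A, B, hA0, hB0, hUk⟩ := exists_ab m
  have hc0 : ∀ j, c₀ j ≠ 0 := by
    intro j
    have := h0 j
    simp only [mul_zero, Finset.sum_const_zero] at this
    exact fun h => this (h ▸ rfl)
  set i0 : Fin n := ⟨0, by omega⟩ with hi0
  set f : Fin N → MvPolynomial (Fin n) ℝ :=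
    (fun j => C (c₀ j) - ∑ i, C (c j i) * X i) with hf
  set P : MvPolynomial (Fin n) ℝ := ∏ j, f j with hP
  have hevalf : ∀ (y : Fin n → ℝ) j, eval y (f j) = c₀ j - ∑ i, c j i * y i := by
    intro y j
    simp [hf]
  have hevalP : ∀ y : Fin n → ℝ, eval y P = ∏ j, (c₀ j - ∑ i, c j i * y i) := by
    intro y
    rw [hP, eval_prod]
    exact Finset.prod_congr rfl fun j _ => hevalf y j
  -- total degree bound
  have hdegf : ∀ j, (f j).totalDegree ≤ 1 := by
    intro j
    rw [hf]
    refine le_trans (totalDegree_sub _ _) (max_le (by simp [totalDegree_C]) ?_)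
    refine le_trans (totalDegree_finset_sum _ _) (Finset.sup_le fun i _ => ?_)
    refine le_trans (totalDegree_mul _ _) ?_
    simp [totalDegree_C, totalDegree_X]
  have hdegP : P.totalDegree ≤ N := by
    refine le_trans (totalDegree_finset_prod _ _) ?_
    refine le_trans (Finset.sum_le_sum fun j _ => hdegf j) ?_
    simp
  -- covering in polynomial form
  have hcov2 : ∀ a : Fin n → Fin (m + 1), a ≠ 0 → ∃ j₁ j₂ : Fin N, j₁ ≠ j₂ ∧
      eval (fun i => ((a i : ℕ) : ℝ)) (f j₁) = 0 ∧
      eval (fun i => ((a i : ℕ) : ℝ)) (f j₂) = 0 := by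
    intro a ha
    set xa : Fin n → ℝ := fun i => ((a i : ℕ) : ℝ) with hxa
    have hx : ∀ i, ∃ jj : ℕ, jj ≤ m ∧ xa i = (jj : ℝ) := fun i => ⟨a i, Fin.is_le _, rfl⟩
    have hxne : xa ≠ 0 := by
      intro hcontr
      apply ha
      funext i
      have h1 := congrFun hcontr i
      simp only [hxa, Pi.zero_apply] at h1
      have h2 : (a i : ℕ) = 0 := by exact_mod_cast h1
      exact Fin.ext h2
    have h2 := hcov xa hx hxne
    have hfin : {j | ∑ i, c j i * xa i = c₀ j}.Finite := Set.toFinite _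
    obtain ⟨j₁, hj₁, j₂, hj₂, hne⟩ := (Set.one_lt_ncard hfin).mp (by omega)
    refine ⟨j₁, j₂, hne, ?_, ?_⟩
    · rw [hevalf]
      rw [Set.mem_setOf_eq] at hj₁
      rw [hj₁]
      ring
    · rw [hevalf]
      rw [Set.mem_setOf_eq] at hj₂
      rw [hj₂]
      ring
  -- the functional
  set L : MvPolynomial (Fin n) ℝ → ℝ := fun Q =>
    ∑ a : Fin n → Fin (m + 1), (∏ i ∈ Finset.univ.erase i0, w (a i)) *
      (A (a i0) * eval (fun i => ((a i : ℕ) : ℝ)) Q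
       + B (a i0) * eval (fun i => ((a i : ℕ) : ℝ)) (pderiv i0 Q)) with hL
  -- L is zero on P via monomial expansion
  have hLP0 : L P = 0 := by
    have hPev : ∀ y : Fin n → ℝ, eval y P
        = ∑ γ ∈ P.support, eval y (monomial γ (coeff γ P)) := by
      intro y
      conv_lhs => rw [MvPolynomial.as_sum P]
      rw [map_sum]
    have hPder : ∀ y : Fin n → ℝ, eval y (pderiv i0 P)
        = ∑ γ ∈ P.support, eval y (pderiv i0 (monomial γ (coeff γ P))) := by
      intro y
      conv_lhs => rw [MvPolynomial.as_sum P]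
      rw [map_sum, map_sum]
    have expand : ∀ a : Fin n → Fin (m + 1),
        (∏ i ∈ Finset.univ.erase i0, w (a i)) *
          (A (a i0) * eval (fun i => ((a i : ℕ) : ℝ)) P
           + B (a i0) * eval (fun i => ((a i : ℕ) : ℝ)) (pderiv i0 P))
        = ∑ γ ∈ P.support, (∏ i ∈ Finset.univ.erase i0, w (a i)) *
          (A (a i0) * eval (fun i => ((a i : ℕ) : ℝ)) (monomial γ (coeff γ P))
           + B (a i0) * eval (fun i => ((a i : ℕ) : ℝ)) (pderiv i0 (monomial γ (coeff γ P)))) := by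
      intro a
      rw [hPev, hPder, Finset.mul_sum, Finset.mul_sum, ← Finset.sum_add_distrib,
        Finset.mul_sum]
    rw [hL]
    simp only []
    rw [Finset.sum_congr rfl (fun a _ => expand a), Finset.sum_comm]
    refine Finset.sum_eq_zero fun γ hγ => ?_
    rw [mono_sum_eq m n w A B i0 γ (coeff γ P)]
    by_cases hcase : γ i0 < m + m
    · rw [hUk (γ i0) hcase]
      ring
    · have hsum : ∑ i, γ i ≤ N := by
        refine le_trans ?_ hdegP
        have h1 := MvPolynomial.le_totalDegree hγ
        rwa [Finsupp.sum_fintype _ _ (fun i => rfl)] at h1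
      have hex : ∃ i ∈ Finset.univ.erase i0, γ i < m := by
        by_contra hno
        push_neg at hno
        have h1 : (Finset.univ.erase i0).card • m ≤ ∑ i ∈ Finset.univ.erase i0, γ i :=
          Finset.card_nsmul_le_sum _ _ _ hno
        have hcard : (Finset.univ.erase i0).card = n - 1 := by
          rw [Finset.card_erase_of_mem (Finset.mem_univ _), Finset.card_univ, Fintype.card_fin]
        have h2 : γ i0 + ∑ i ∈ Finset.univ.erase i0, γ i = ∑ i, γ i :=
          Finset.add_sum_erase _ _ (Finset.mem_univ i0)
        obtain ⟨n', rfl⟩ : ∃ n', n = n' + 1 := ⟨n - 1, by omega⟩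
        rw [hcard] at h1
        have hcard2 : n' + 1 - 1 = n' := by omega
        rw [hcard2, smul_eq_mul] at h1
        have hkey : m * (n' + 1) + m ≤ N := by
          calc m * (n' + 1) + m = n' * m + (m + m) := by ring
            _ ≤ (∑ i ∈ Finset.univ.erase i0, γ i) + γ i0 :=
                add_le_add h1 (not_lt.mp hcase)
            _ = ∑ i, γ i := by rw [add_comm]; exact h2
            _ ≤ N := hsum
        exact absurd hkey (not_le.mpr hNlt)
      obtain ⟨i', hi', hlt⟩ := hex
      rw [Finset.prod_eq_zero hi' (hwk (γ i') hlt)]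
      ring
  -- L P evaluates to the product of c₀
  have hLPval : L P = ∏ j, c₀ j := by
    rw [hL]
    refine Finset.sum_eq_single_of_mem 0 (Finset.mem_univ _) ?_ |>.trans ?_
    · intro a _ ha
      obtain ⟨j₁, j₂, hne, hz1, hz2⟩ := hcov2 a ha
      have hevP : eval (fun i => ((a i : ℕ) : ℝ)) P = 0 := by
        rw [hP, eval_prod]
        exact Finset.prod_eq_zero (Finset.mem_univ j₁) hz1
      have hevD : eval (fun i => ((a i : ℕ) : ℝ)) (pderiv i0 P) = 0 := by
        have hsplit : P = f j₁ * (f j₂ * ∏ j ∈ (Finset.univ.erase j₁).erase j₂, f j) := by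
          rw [hP, ← Finset.mul_prod_erase Finset.univ f (Finset.mem_univ j₁),
            ← Finset.mul_prod_erase (Finset.univ.erase j₁) f
              (Finset.mem_erase.mpr ⟨hne.symm, Finset.mem_univ j₂⟩)]
        rw [hsplit, pderiv_mul, pderiv_mul]
        simp only [map_add, map_mul, hz1, hz2]
        ring
      rw [hevP, hevD]
      ring
    · have hx0 : (fun i => (((0 : Fin n → Fin (m + 1)) i : ℕ) : ℝ)) = (fun _ => (0 : ℝ)) := by
        funext i
        simp
      rw [hx0]
      have h1 : eval (fun _ => (0 : ℝ)) P = ∏ j, c₀ j := by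
        rw [hevalP]
        exact Finset.prod_congr rfl fun j _ => by simp
      rw [h1]
      simp only [Pi.zero_apply, hw0, hA0, hB0]
      simp
  rw [hLP0] at hLPval
  exact (Finset.prod_ne_zero_iff.mpr fun j _ => hc0 j) hLPval.symm

end Multivariate


lemma member (m n : ℕ) (hm : 1 ≤ m) (hn : 2 ≤ n) :
    ∃ (c : Fin (m * n + m) → Fin n → ℝ) (c₀ : Fin (m * n + m) → ℝ),
        (∀ j, c j ≠ 0) ∧
        (∀ x : Fin n → ℝ, (∀ i, ∃ j : ℕ, j ≤ m ∧ x i = (j : ℝ)) → x ≠ 0 →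
          2 ≤ Set.ncard {j | ∑ i, c j i * x i = c₀ j}) ∧
        (∀ j, ∑ i, c j i * (0 : ℝ) ≠ c₀ j) := by
  classical
  have hm0 : 0 < m := hm
  set c : Fin (m * n + m) → Fin n → ℝ := fun j i =>
    if (j : ℕ) < m * n then (if (i : ℕ) = (j : ℕ) / m then 1 else 0) else 1 with hc
  set c₀ : Fin (m * n + m) → ℝ := fun j =>
    if (j : ℕ) < m * n then (((j : ℕ) % m + 1 : ℕ) : ℝ) else (((j : ℕ) - m * n + 1 : ℕ) : ℝ)
    with hc₀
  refine ⟨c, c₀, ?_, ?_, ?_⟩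
  · -- c j ≠ 0
    intro j hj
    by_cases h : (j : ℕ) < m * n
    · have hlt : (j : ℕ) / m < n := by
        rw [Nat.div_lt_iff_lt_mul hm0, Nat.mul_comm n m]
        omega
      have := congrFun hj ⟨(j : ℕ) / m, hlt⟩
      simp only [hc, h, if_true, Pi.zero_apply] at this
      norm_num at this
    · have := congrFun hj ⟨0, by omega⟩
      simp only [hc, h, if_false, Pi.zero_apply] at this
      norm_num at this
  · -- covering
    intro x hx hxne
    choose v hv1 hv2 using hx
    have hex : ∃ i, x i ≠ 0 := by
      by_contra hno
      push_neg at hno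
      exact hxne (funext fun i => hno i)
    obtain ⟨i₁, hi₁⟩ := hex
    have hvpos : ∀ i, x i ≠ 0 → 1 ≤ v i := by
      intro i hi
      rcases Nat.eq_zero_or_pos (v i) with h | h
      · exfalso; apply hi; rw [hv2 i, h]; norm_num
      · exact h
    -- encoding of axis hyperplanes
    have henc : ∀ i : Fin n, x i ≠ 0 → (m * (i : ℕ) + (v i - 1)) < m * n + m := by
      intro i _
      have h1 : (i : ℕ) < n := i.2
      have h2 : v i - 1 < m := by have := hv1 i; omega
      have : m * (i : ℕ) + (v i - 1) < m * ((i : ℕ) + 1) := by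
        rw [Nat.mul_add, Nat.mul_one]; omega
      have h3 : m * ((i : ℕ) + 1) ≤ m * n := Nat.mul_le_mul_left m (by omega)
      omega
    -- the axis hyperplane at i is satisfied
    have haxis : ∀ (i : Fin n) (hi : x i ≠ 0),
        ∑ i', c ⟨m * (i : ℕ) + (v i - 1), by
            have := henc i hi; omega⟩ i' * x i'
          = c₀ ⟨m * (i : ℕ) + (v i - 1), by have := henc i hi; omega⟩ := by
      intro i hi
      have hr : v i - 1 < m := by have := hv1 i; have := hvpos i hi; omega
      have hjlt : m * (i : ℕ) + (v i - 1) < m * n := by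
        have h1 : (i : ℕ) + 1 ≤ n := i.2
        calc m * (i : ℕ) + (v i - 1) < m * (i : ℕ) + m := by omega
          _ = m * ((i : ℕ) + 1) := by ring
          _ ≤ m * n := Nat.mul_le_mul_left m h1
      have hdiv : (m * (i : ℕ) + (v i - 1)) / m = (i : ℕ) := by
        rw [Nat.mul_add_div hm0, Nat.div_eq_of_lt hr, Nat.add_zero]
      have hmod : (m * (i : ℕ) + (v i - 1)) % m = v i - 1 := by
        rw [Nat.mul_add_mod, Nat.mod_eq_of_lt hr]
      simp only [hc, hc₀, hjlt, if_true, hdiv, hmod]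
      have hsum : ∑ i' : Fin n, (if (i' : ℕ) = (i : ℕ) then (1 : ℝ) else 0) * x i' = x i := by
        have hterm : ∀ i' : Fin n,
            (if (i' : ℕ) = (i : ℕ) then (1 : ℝ) else 0) * x i' = if i' = i then x i' else 0 := by
          intro i'
          by_cases hii : i' = i
          · subst hii; simp
          · rw [if_neg (fun hcontr => hii (Fin.ext hcontr)), if_neg hii, zero_mul]
        rw [Finset.sum_congr rfl (fun i' _ => hterm i'), Finset.sum_ite_eq' Finset.univ i x,
          if_pos (Finset.mem_univ i)]
      rw [hsum, hv2 i]
      have : v i - 1 + 1 = v i := by have := hvpos i hi; omega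
      rw [this]
  -- now two cases
    by_cases hsep : ∃ i₂, i₂ ≠ i₁ ∧ x i₂ ≠ 0
    · obtain ⟨i₂, hne12, hi₂⟩ := hsep
      set j₁ : Fin (m * n + m) := ⟨m * (i₁ : ℕ) + (v i₁ - 1), by have := henc i₁ hi₁; omega⟩
      set j₂ : Fin (m * n + m) := ⟨m * (i₂ : ℕ) + (v i₂ - 1), by have := henc i₂ hi₂; omega⟩
      have hjne : j₁ ≠ j₂ := by
        intro h
        apply hne12
        have hval : (j₁ : ℕ) = (j₂ : ℕ) := congrArg Fin.val h
        simp only [j₁, j₂] at hval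
        have h1 : v i₁ - 1 < m := by have := hv1 i₁; have := hvpos i₁ hi₁; omega
        have h2 : v i₂ - 1 < m := by have := hv1 i₂; have := hvpos i₂ hi₂; omega
        have : (i₁ : ℕ) = (i₂ : ℕ) := by
          have d1 := congrArg (· / m) hval
          simpa [Nat.mul_add_div hm0, Nat.div_eq_of_lt h1, Nat.div_eq_of_lt h2] using d1
        exact (Fin.ext this).symm
      have hsub : {j₂, j₁} ⊆ {j | ∑ i, c j i * x i = c₀ j} := by
        intro j hj
        rcases hj with h | h
        · rw [h]; exact haxis i₂ hi₂
        · rw [Set.mem_singleton_iff] at h; rw [h]; exact haxis i₁ hi₁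
      calc (2 : ℕ) = ({j₂, j₁} : Set (Fin (m * n + m))).ncard := (Set.ncard_pair hjne.symm).symm
        _ ≤ _ := Set.ncard_le_ncard hsub (Set.toFinite _)
    · -- single nonzero coordinate: axis plane + sum plane
      push_neg at hsep
      have hz : ∀ i, i ≠ i₁ → x i = 0 := fun i hi => by
        by_contra hxi; exact hxi (hsep i hi)
      set j₁ : Fin (m * n + m) := ⟨m * (i₁ : ℕ) + (v i₁ - 1), by have := henc i₁ hi₁; omega⟩
      have hv1m : v i₁ - 1 < m := by have := hv1 i₁; have := hvpos i₁ hi₁; omega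
      set j₂ : Fin (m * n + m) := ⟨m * n + (v i₁ - 1), by omega⟩
      have hjne : j₁ ≠ j₂ := by
        intro h
        have hval : (j₁ : ℕ) = (j₂ : ℕ) := congrArg Fin.val h
        simp only [j₁, j₂] at hval
        have h1 : (i₁ : ℕ) + 1 ≤ n := i₁.2
        have : m * ((i₁ : ℕ) + 1) ≤ m * n := Nat.mul_le_mul_left m h1
        have : m * (i₁ : ℕ) + (v i₁ - 1) < m * n := by
          have hh : m * ((i₁ : ℕ) + 1) = m * (i₁ : ℕ) + m := by ring
          omega
        omega
      have hj₂ : ∑ i, c j₂ i * x i = c₀ j₂ := by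
        have hnlt : ¬ ((j₂ : ℕ) < m * n) := by simp only [j₂]; omega
        simp only [hc, hc₀, hnlt, if_false, one_mul]
        have : ∑ i, x i = x i₁ := Finset.sum_eq_single i₁ (fun i _ hi => hz i hi)
          (fun h => absurd (Finset.mem_univ i₁) h)
        rw [this, hv2 i₁]
        congr 1


        have := hvpos i₁ hi₁
        simp only [j₂]
        omega
      have hsub : {j₁, j₂} ⊆ {j | ∑ i, c j i * x i = c₀ j} := by
        intro j hj
        rcases hj with h | h
        · rw [h]; exact haxis i₁ hi₁
        · rw [Set.mem_singleton_iff] at h; rw [h]; exact hj₂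
      calc (2 : ℕ) = ({j₁, j₂} : Set (Fin (m * n + m))).ncard := (Set.ncard_pair hjne).symm
        _ ≤ _ := Set.ncard_le_ncard hsub (Set.toFinite _)
  · -- origin not covered
    intro j
    simp only [mul_zero, Finset.sum_const_zero, hc₀]
    by_cases h : (j : ℕ) < m * n
    · rw [if_pos h]
      exact ne_of_lt (by exact_mod_cast Nat.succ_pos _)
    · rw [if_neg h]
      exact ne_of_lt (by exact_mod_cast Nat.succ_pos _)


/-- for `n ≥ 2` and `m ≥ 1`, the minimum number of affine hyperplanes
in `ℝ^n` covering every point of `{0,…,m}^n \ {0}` at least twice (with multiplicity)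
while avoiding the origin is exactly `mn + m`, i.e. `f_m(n,2) = mn + m`. -/
theorem stmt13 (m n : ℕ) (hm : 1 ≤ m) (hn : 2 ≤ n) :
    IsLeast {N : ℕ | ∃ (c : Fin N → Fin n → ℝ) (c₀ : Fin N → ℝ),
        (∀ j, c j ≠ 0) ∧
        (∀ x : Fin n → ℝ, (∀ i, ∃ j : ℕ, j ≤ m ∧ x i = (j : ℝ)) → x ≠ 0 →
          2 ≤ Set.ncard {j | ∑ i, c j i * x i = c₀ j}) ∧
        (∀ j, ∑ i, c j i * (0 : ℝ) ≠ c₀ j)}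
      (m * n + m) := by
  constructor
  · exact member m n hm hn
  · rintro N ⟨c, c₀, h1, h2, h3⟩
    exact lower_bound m n N hm hn c c₀ h2 h3
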